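/- Let $\varepsilon\in(0,1/3)$ and consider the Theta-network consisting of two arcs of a unit circle, each of arclength $\varepsilon$, joined by the straight chord between their endpoints (a segment of length $\sqrt{2}\sqrt{1-\cos\varepsilon}$). Its elastic energy is $E_\mu=2\varepsilon+\mu(2\varepsilon+\sqrt{2}\sqrt{1-\cos\varepsilon})$, and $E_\mu\to 0$ as $\varepsilon\to 0$. Consequently, $\inf\{E_\mu(\Theta):\Theta\text{ a Theta-network}\}=0$ and the infimum is not attained. -/
import Mathlib


open Set Filter Real

/-- The degenerating Theta--networks: two unit-circle arcs of arclength `ε`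
(curvature `1`) joined by a chord of length `√2 √(1-cos ε)` (curvature `0`) have
elastic energy `E_μ = 2ε + μ(2ε + √2 √(1-cos ε))`, which tends to `0` as `ε → 0⁺`.
Consequently the infimum of the elastic energy over this family of Theta--networks
is `0` and it is not attained. -/
theorem theta_network_energy_infimum_zero (μ : ℝ) (hμ : 0 < μ) :
    (∀ ε ∈ Ioo (0:ℝ) (1/3),
      2 * (∫ s in (0:ℝ)..ε, ((1:ℝ)^2 + μ)) +
        (∫ s in (0:ℝ)..(Real.sqrt 2 * Real.sqrt (1 - Real.cos ε)), ((0:ℝ)^2 + μ))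
        = 2*ε + μ*(2*ε + Real.sqrt 2 * Real.sqrt (1 - Real.cos ε))) ∧
    Tendsto (fun ε : ℝ => 2*ε + μ*(2*ε + Real.sqrt 2 * Real.sqrt (1 - Real.cos ε)))
      (nhdsWithin 0 (Ioi 0)) (nhds 0) ∧
    IsGLB ((fun ε : ℝ => 2*ε + μ*(2*ε + Real.sqrt 2 * Real.sqrt (1 - Real.cos ε))) ''
      Ioo (0:ℝ) (1/3)) 0 ∧
    (0:ℝ) ∉ (fun ε : ℝ => 2*ε + μ*(2*ε + Real.sqrt 2 * Real.sqrt (1 - Real.cos ε))) ''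
      Ioo (0:ℝ) (1/3) := by
  have hcont : Continuous (fun ε : ℝ =>
      2*ε + μ*(2*ε + Real.sqrt 2 * Real.sqrt (1 - Real.cos ε))) := by
    continuity
  have htend : Tendsto (fun ε : ℝ => 2*ε + μ*(2*ε + Real.sqrt 2 * Real.sqrt (1 - Real.cos ε)))
      (nhdsWithin 0 (Ioi 0)) (nhds 0) := by
    have := (hcont.continuousAt (x := (0:ℝ))).mono_left
      (nhdsWithin_le_nhds (s := Ioi (0:ℝ)))
    simpa using this
  have hpos : ∀ ε ∈ Ioo (0:ℝ) (1/3),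
      0 < 2*ε + μ*(2*ε + Real.sqrt 2 * Real.sqrt (1 - Real.cos ε)) := by
    intro ε hε
    have h1 : 0 ≤ Real.sqrt 2 * Real.sqrt (1 - Real.cos ε) :=
      mul_nonneg (Real.sqrt_nonneg _) (Real.sqrt_nonneg _)
    have h2 : 0 ≤ μ * (2*ε + Real.sqrt 2 * Real.sqrt (1 - Real.cos ε)) :=
      mul_nonneg hμ.le (by nlinarith [hε.1])
    nlinarith [hε.1]
  refine ⟨?_, htend, ⟨?_, ?_⟩, ?_⟩
  · intro ε hε
    simp [intervalIntegral.integral_const]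
    ring
  · rintro x ⟨ε, hε, rfl⟩
    exact (hpos ε hε).le
  · intro b hb
    refine ge_of_tendsto htend ?_
    filter_upwards [Ioo_mem_nhdsGT_of_mem (by constructor <;> norm_num :
      (0:ℝ) ∈ Ico (0:ℝ) (1/3))] with ε hε
    exact hb ⟨ε, hε, rfl⟩
  · rintro ⟨ε, hε, h⟩
    exact absurd h (ne_of_gt (hpos ε hε))
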